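/- Let p ∈ (1,∞) and let A = U + iV be an n×n complex matrix (U = Re A, V = Im A entrywise) such that U_s is positive definite, and let A_s = (A + Aᵀ)/2 be the symmetric part of A. Then the following are equivalent: (1) Δ_p(A_s) ≥ 0; (2) |p − 2|·|⟨Vα,α⟩| ≤ 2√(p−1)·⟨Uα,α⟩ for all α ∈ ℝⁿ; (3) for every α ∈ ℝⁿ, the complex number ⟨Aα,α⟩ lies in the closed sector S̄_{φ_p} = {0} ∪ { z ∈ ℂ∖{0} : |arg z| ≤ φ_p }, where φ_p = arccos|1 − 2/p|. -/

import Mathlib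

open scoped BigOperators ComplexConjugate Matrix

noncomputable section

namespace Paper

/-- The sesquilinear pairing `⟨z,w⟩ = ∑ j, z j * conj (w j)` on `ℂⁿ`. -/
def herm {n : ℕ} (z w : Fin n → ℂ) : ℂ := ∑ j, z j * conj (w j)

/-- Euclidean norm of a complex vector, `|z| = √⟨z,z⟩`. -/
def cnorm {n : ℕ} (z : Fin n → ℂ) : ℝ := Real.sqrt (herm z z).re

/-- Componentwise complex conjugate of a vector. -/
def vconj {n : ℕ} (z : Fin n → ℂ) : Fin n → ℂ := fun j => conj (z j)

/-- The ℝ-linear map `𝒥_p(α + iβ) = α/p + iβ/q`, where `1/p + 1/q = 1`,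
i.e. `1/q = 1 - 1/p`. -/
def Jmap {n : ℕ} (p : ℝ) (ξ : Fin n → ℂ) : Fin n → ℂ :=
  fun j => (((ξ j).re / p : ℝ) : ℂ) + Complex.I * (((ξ j).im * (1 - 1 / p) : ℝ) : ℂ)

/-- `Δ_p(A) = 2 · min { Re⟨Aξ, 𝒥_p ξ⟩ : ξ ∈ ℂⁿ, |ξ| = 1 }`. -/
def Deltap {n : ℕ} (p : ℝ) (A : Matrix (Fin n) (Fin n) ℂ) : ℝ :=
  sInf {t : ℝ | ∃ ξ : Fin n → ℂ, cnorm ξ = 1 ∧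
    t = 2 * (herm (A.mulVec ξ) (Jmap p ξ)).re}

/-- `Δ_r(A) = min { Re⟨Aξ,ξ⟩ − |1 − 2/r|·|⟨Aξ,ξ̄⟩| : |ξ| = 1 }`, the extension of
`Δ_p` to all `r > 0`. -/
def DeltaGen {n : ℕ} (r : ℝ) (A : Matrix (Fin n) (Fin n) ℂ) : ℝ :=
  sInf {t : ℝ | ∃ ξ : Fin n → ℂ, cnorm ξ = 1 ∧
    t = (herm (A.mulVec ξ) ξ).re - |1 - 2 / r| * norm (herm (A.mulVec ξ) (vconj ξ))}

/-- Membership in the class `𝒜_{λ,Λ}`: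
`Re⟨Aξ,ξ⟩ ≥ λ|ξ|²` and `|⟨Aξ,η⟩| ≤ Λ|ξ||η|`. -/
def memA {n : ℕ} (lam Lam : ℝ) (A : Matrix (Fin n) (Fin n) ℂ) : Prop :=
  (∀ ξ : Fin n → ℂ, lam * cnorm ξ ^ 2 ≤ (herm (A.mulVec ξ) ξ).re) ∧
  (∀ ξ η : Fin n → ℂ, norm (herm (A.mulVec ξ) η) ≤ Lam * cnorm ξ * cnorm η)

/-- `λ_A = min { Re⟨Aξ,ξ⟩ : |ξ| = 1 }`. -/
def lamA {n : ℕ} (A : Matrix (Fin n) (Fin n) ℂ) : ℝ :=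
  sInf {t : ℝ | ∃ ξ : Fin n → ℂ, cnorm ξ = 1 ∧ t = (herm (A.mulVec ξ) ξ).re}

/-- `Λ_A = max { |⟨Aξ,η⟩| : |ξ| = |η| = 1 }`. -/
def LamA {n : ℕ} (A : Matrix (Fin n) (Fin n) ℂ) : ℝ :=
  sSup {t : ℝ | ∃ ξ η : Fin n → ℂ, cnorm ξ = 1 ∧ cnorm η = 1 ∧
    t = norm (herm (A.mulVec ξ) η)}

/-- `μ(A) = inf { Re⟨Aξ,ξ⟩/|⟨Aξ,ξ̄⟩| : ⟨Aξ,ξ̄⟩ ≠ 0 }`. -/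
def muA {n : ℕ} (A : Matrix (Fin n) (Fin n) ℂ) : ℝ :=
  sInf {t : ℝ | ∃ ξ : Fin n → ℂ, herm (A.mulVec ξ) (vconj ξ) ≠ 0 ∧
    t = (herm (A.mulVec ξ) ξ).re / norm (herm (A.mulVec ξ) (vconj ξ))}

/-- Second real Fréchet derivative of `F : ℂ → ℝ` at `ζ`, as a bilinear expression. -/
def D2 (F : ℂ → ℝ) (ζ : ℂ) (ξ η : ℂ) : ℝ := fderiv ℝ (fderiv ℝ F) ζ ξ η

/-- `F : ℂ → ℝ` is twice real-Fréchet differentiable at `ζ`. -/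
def TwiceDiffAt (F : ℂ → ℝ) (ζ : ℂ) : Prop :=
  DifferentiableAt ℝ F ζ ∧ DifferentiableAt ℝ (fderiv ℝ F) ζ

/-- `H_F^A[ζ;ξ] = ∑ j, D²F(ζ)[ξ_j, (Aξ)_j]`. -/
def HFA {n : ℕ} (F : ℂ → ℝ) (A : Matrix (Fin n) (Fin n) ℂ) (ζ : ℂ) (ξ : Fin n → ℂ) : ℝ :=
  ∑ j, D2 F ζ (ξ j) (A.mulVec ξ j)

/-- The power function `F_r(ζ) = |ζ|^r`. -/
def Fpow (r : ℝ) (ζ : ℂ) : ℝ := norm ζ ^ r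

/-- Real dot product. -/
def rdot {n : ℕ} (u v : Fin n → ℝ) : ℝ := ∑ j, u j * v j

/-- Euclidean norm of a real vector. -/
def enorm {n : ℕ} (u : Fin n → ℝ) : ℝ := Real.sqrt (∑ j, u j ^ 2)

/-- Operator norm `‖M‖ = max { |Mu| : |u| = 1 }` of a real matrix. -/
def opnormR {n : ℕ} (M : Matrix (Fin n) (Fin n) ℝ) : ℝ :=
  sSup {t : ℝ | ∃ u : Fin n → ℝ, enorm u = 1 ∧ t = enorm (M.mulVec u)}

/-- Symmetric part `M_s = (M + Mᵀ)/2`. -/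
def symPart {n : ℕ} {R : Type*} [Field R] (M : Matrix (Fin n) (Fin n) R) :
    Matrix (Fin n) (Fin n) R := (2 : R)⁻¹ • (M + Mᵀ)

/-- Antisymmetric part `M_a = (M − Mᵀ)/2`. -/
def antiPart {n : ℕ} {R : Type*} [Field R] (M : Matrix (Fin n) (Fin n) R) :
    Matrix (Fin n) (Fin n) R := (2 : R)⁻¹ • (M - Mᵀ)

/-- `𝒱_p(V) = ((p−2)/(2√(p−1)))·V_s + (p/(2√(p−1)))·V_a`. -/
def Vmap {n : ℕ} (p : ℝ) (V : Matrix (Fin n) (Fin n) ℝ) : Matrix (Fin n) (Fin n) ℝ :=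
  ((p - 2) / (2 * Real.sqrt (p - 1))) • symPart V + (p / (2 * Real.sqrt (p - 1))) • antiPart V

/-- A real matrix is (symmetric) positive definite. -/
def RPosDef {n : ℕ} (M : Matrix (Fin n) (Fin n) ℝ) : Prop :=
  Mᵀ = M ∧ ∀ u : Fin n → ℝ, u ≠ 0 → 0 < rdot (M.mulVec u) u

/-- The complex matrix `U + iV` built from two real matrices. -/
def cplx {n : ℕ} (U V : Matrix (Fin n) (Fin n) ℝ) : Matrix (Fin n) (Fin n) ℂ :=
  Matrix.of fun i j => ((U i j : ℂ) + Complex.I * (V i j : ℂ))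

/-- `Φ : ℂ×ℂ → ℝ` is twice real-Fréchet differentiable at `v`. -/
def TwiceDiffAt2 (Φ : ℂ × ℂ → ℝ) (v : ℂ × ℂ) : Prop :=
  DifferentiableAt ℝ Φ v ∧ DifferentiableAt ℝ (fderiv ℝ Φ) v

/-- `H_Φ^{(A,B)}[v;ω] = ∑ j, D²Φ(v)[(ω₁ⱼ, ω₂ⱼ), ((Aω₁)ⱼ, (Bω₂)ⱼ)]`. -/
def HAB {n : ℕ} (Φ : ℂ × ℂ → ℝ) (A B : Matrix (Fin n) (Fin n) ℂ) (v : ℂ × ℂ)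
    (ω₁ ω₂ : Fin n → ℂ) : ℝ :=
  ∑ j, fderiv ℝ (fderiv ℝ Φ) v (ω₁ j, ω₂ j) (A.mulVec ω₁ j, B.mulVec ω₂ j)

/-- The Nazarov–Treil Bellman function `Q_{p,δ}` (with `q = p/(p−1)` passed explicitly). -/
def QNT (p q δ : ℝ) (ζ η : ℂ) : ℝ :=
  norm ζ ^ p + norm η ^ q +
    δ * (if norm ζ ^ p ≤ norm η ^ q
      then norm ζ ^ (2 : ℝ) * norm η ^ (2 - q)
      else (2 / p) * norm ζ ^ p + (2 / q - 1) * norm η ^ q)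

/-- `Δ_p` of a matrix-valued function on a subset `Ω ⊆ ℝᵐ`:
`2 · essinf_{x∈Ω} min_{|ξ|=1} Re⟨A(x)ξ, 𝒥_p ξ⟩`. -/
def DeltapAE {m n : ℕ} (p : ℝ) (A : (Fin m → ℝ) → Matrix (Fin n) (Fin n) ℂ)
    (Ω : Set (Fin m → ℝ)) : ℝ :=
  2 * essInf (fun x => sInf {t : ℝ | ∃ ξ : Fin n → ℂ, cnorm ξ = 1 ∧
      t = (herm ((A x).mulVec ξ) (Jmap p ξ)).re}) (MeasureTheory.volume.restrict Ω)

end Paper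


namespace Stmt10Aux
open Paper Finset
variable {n : ℕ}

lemma rdot_eq (M : Matrix (Fin n) (Fin n) ℝ) (x y : Fin n → ℝ) :
    rdot (M.mulVec x) y = ∑ j, ∑ k, M j k * x k * y j := by
  simp only [rdot, Matrix.mulVec, dotProduct, Finset.sum_mul]

lemma bil_symm {M : Matrix (Fin n) (Fin n) ℝ} (hM : Mᵀ = M) (x y : Fin n → ℝ) :
    rdot (M.mulVec x) y = rdot (M.mulVec y) x := by
  rw [rdot_eq, rdot_eq, Finset.sum_comm]
  refine Finset.sum_congr rfl fun j _ => Finset.sum_congr rfl fun k _ => ?_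
  have h : M j k = M k j := by conv_lhs => rw [← hM, Matrix.transpose_apply]
  rw [h]; ring

lemma bil_smul_smul (M : Matrix (Fin n) (Fin n) ℝ) (s t : ℝ) (x y : Fin n → ℝ) :
    rdot (M.mulVec (s • x)) (t • y) = s * t * rdot (M.mulVec x) y := by
  simp only [rdot_eq, Finset.mul_sum, Pi.smul_apply, smul_eq_mul]
  exact Finset.sum_congr rfl fun j _ => Finset.sum_congr rfl fun k _ => by ring

lemma bil_smul_left (M : Matrix (Fin n) (Fin n) ℝ) (s : ℝ) (x y : Fin n → ℝ) :
    rdot (M.mulVec (s • x)) y = s * rdot (M.mulVec x) y := by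
  simp only [rdot_eq, Finset.mul_sum, Pi.smul_apply, smul_eq_mul]
  exact Finset.sum_congr rfl fun j _ => Finset.sum_congr rfl fun k _ => by ring

lemma bil_smul_right (M : Matrix (Fin n) (Fin n) ℝ) (t : ℝ) (x y : Fin n → ℝ) :
    rdot (M.mulVec x) (t • y) = t * rdot (M.mulVec x) y := by
  simp only [rdot_eq, Finset.mul_sum, Pi.smul_apply, smul_eq_mul]
  exact Finset.sum_congr rfl fun j _ => Finset.sum_congr rfl fun k _ => by ring

lemma bil_add_left (M : Matrix (Fin n) (Fin n) ℝ) (x₁ x₂ y : Fin n → ℝ) :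
    rdot (M.mulVec (x₁ + x₂)) y = rdot (M.mulVec x₁) y + rdot (M.mulVec x₂) y := by
  simp only [rdot_eq, ← Finset.sum_add_distrib, Pi.add_apply]
  exact Finset.sum_congr rfl fun j _ => Finset.sum_congr rfl fun k _ => by ring

lemma bil_add_right (M : Matrix (Fin n) (Fin n) ℝ) (x y₁ y₂ : Fin n → ℝ) :
    rdot (M.mulVec x) (y₁ + y₂) = rdot (M.mulVec x) y₁ + rdot (M.mulVec x) y₂ := by
  simp only [rdot_eq, ← Finset.sum_add_distrib, Pi.add_apply]
  exact Finset.sum_congr rfl fun j _ => Finset.sum_congr rfl fun k _ => by ring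

lemma bil_sub_left (M : Matrix (Fin n) (Fin n) ℝ) (x₁ x₂ y : Fin n → ℝ) :
    rdot (M.mulVec (x₁ - x₂)) y = rdot (M.mulVec x₁) y - rdot (M.mulVec x₂) y := by
  simp only [rdot_eq, ← Finset.sum_sub_distrib, Pi.sub_apply]
  exact Finset.sum_congr rfl fun j _ => Finset.sum_congr rfl fun k _ => by ring

lemma bil_sub_right (M : Matrix (Fin n) (Fin n) ℝ) (x y₁ y₂ : Fin n → ℝ) :
    rdot (M.mulVec x) (y₁ - y₂) = rdot (M.mulVec x) y₁ - rdot (M.mulVec x) y₂ := by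
  simp only [rdot_eq, ← Finset.sum_sub_distrib, Pi.sub_apply]
  exact Finset.sum_congr rfl fun j _ => Finset.sum_congr rfl fun k _ => by ring

lemma polar {Q : Matrix (Fin n) (Fin n) ℝ} (hQ : Qᵀ = Q) (x y : Fin n → ℝ) :
    rdot (Q.mulVec (x + y)) (x + y) - rdot (Q.mulVec (x - y)) (x - y)
      = 4 * rdot (Q.mulVec x) y := by
  rw [bil_add_left, bil_add_right, bil_add_right, bil_sub_left, bil_sub_right, bil_sub_right,
    bil_symm hQ y x]
  ring

lemma parallelogram (M : Matrix (Fin n) (Fin n) ℝ) (x y : Fin n → ℝ) :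
    rdot (M.mulVec (x + y)) (x + y) + rdot (M.mulVec (x - y)) (x - y)
      = 2 * rdot (M.mulVec x) x + 2 * rdot (M.mulVec y) y := by
  rw [bil_add_left, bil_add_right, bil_add_right, bil_sub_left, bil_sub_right, bil_sub_right]
  ring

lemma sum_swap_sq (M : Matrix (Fin n) (Fin n) ℝ) (x : Fin n → ℝ) :
    ∑ j, ∑ k, M k j * x k * x j = ∑ j, ∑ k, M j k * x k * x j := by
  rw [Finset.sum_comm]
  exact Finset.sum_congr rfl fun j _ => Finset.sum_congr rfl fun k _ => by ring

lemma sym_rdot (M : Matrix (Fin n) (Fin n) ℝ) (x : Fin n → ℝ) :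
    rdot ((symPart M).mulVec x) x = rdot (M.mulVec x) x := by
  rw [rdot_eq, rdot_eq]
  have e1 : ∀ j ∈ Finset.univ, ∀ k ∈ Finset.univ,
      symPart M j k * x k * x j
        = 2⁻¹ * (M j k * x k * x j) + 2⁻¹ * (M k j * x k * x j) := by
    intro j _ k _
    simp only [symPart, Matrix.smul_apply, Matrix.add_apply, Matrix.transpose_apply,
      smul_eq_mul]
    ring
  calc ∑ j, ∑ k, symPart M j k * x k * x j
      = ∑ j, ∑ k, (2⁻¹ * (M j k * x k * x j) + 2⁻¹ * (M k j * x k * x j)) :=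
        Finset.sum_congr rfl fun j hj => Finset.sum_congr rfl fun k hk => e1 j hj k hk
    _ = 2⁻¹ * (∑ j, ∑ k, M j k * x k * x j) + 2⁻¹ * (∑ j, ∑ k, M k j * x k * x j) := by
        simp only [Finset.sum_add_distrib, ← Finset.mul_sum]
    _ = ∑ j, ∑ k, M j k * x k * x j := by rw [sum_swap_sq]; ring

lemma symPart_symm (M : Matrix (Fin n) (Fin n) ℝ) : (symPart M)ᵀ = symPart M := by
  ext i j
  simp only [symPart, Matrix.transpose_apply, Matrix.smul_apply, Matrix.add_apply,
    smul_eq_mul]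
  ring

lemma symPart_cplx (U V : Matrix (Fin n) (Fin n) ℝ) :
    symPart (cplx U V) = cplx (symPart U) (symPart V) := by
  ext i j
  simp only [symPart, cplx, Matrix.smul_apply, Matrix.add_apply, Matrix.transpose_apply,
    Matrix.of_apply, smul_eq_mul]
  push_cast
  ring

end Stmt10Aux

namespace Stmt10Aux
open Paper Finset
variable {n : ℕ}

lemma herm_re (z w : Fin n → ℂ) :
    (herm z w).re = ∑ j, ((z j).re * (w j).re + (z j).im * (w j).im) := by
  rw [herm, Complex.re_sum]
  exact Finset.sum_congr rfl fun j _ => by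
    simp [Complex.mul_re]

lemma herm_im (z w : Fin n → ℂ) :
    (herm z w).im = ∑ j, ((z j).im * (w j).re - (z j).re * (w j).im) := by
  rw [herm, Complex.im_sum]
  exact Finset.sum_congr rfl fun j _ => by
    simp [Complex.mul_im]; ring

lemma herm_self_re (z : Fin n → ℂ) :
    (herm z z).re = ∑ j, ((z j).re ^ 2 + (z j).im ^ 2) := by
  rw [herm_re]
  exact Finset.sum_congr rfl fun j _ => by ring

lemma cplx_mulVec_re (U V : Matrix (Fin n) (Fin n) ℝ) (ξ : Fin n → ℂ) (j : Fin n) :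
    ((cplx U V).mulVec ξ j).re = (∑ k, U j k * (ξ k).re) - ∑ k, V j k * (ξ k).im := by
  rw [Matrix.mulVec, dotProduct, Complex.re_sum, ← Finset.sum_sub_distrib]
  exact Finset.sum_congr rfl fun k _ => by
    simp [cplx, add_mul, Complex.mul_re]; ring

lemma cplx_mulVec_im (U V : Matrix (Fin n) (Fin n) ℝ) (ξ : Fin n → ℂ) (j : Fin n) :
    ((cplx U V).mulVec ξ j).im = (∑ k, U j k * (ξ k).im) + ∑ k, V j k * (ξ k).re := by
  rw [Matrix.mulVec, dotProduct, Complex.im_sum, ← Finset.sum_add_distrib]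
  exact Finset.sum_congr rfl fun k _ => by
    simp [cplx, add_mul, Complex.mul_im]

lemma Jmap_re (p : ℝ) (ξ : Fin n → ℂ) (j : Fin n) : (Jmap p ξ j).re = (ξ j).re / p := by
  simp [Jmap]

lemma Jmap_im (p : ℝ) (ξ : Fin n → ℂ) (j : Fin n) :
    (Jmap p ξ j).im = (ξ j).im * (1 - 1 / p) := by
  simp [Jmap]

lemma rdot_def (M : Matrix (Fin n) (Fin n) ℝ) (x y : Fin n → ℝ) :
    rdot (M.mulVec x) y = ∑ j, (∑ k, M j k * x k) * y j := rfl

lemma keyD (P Q : Matrix (Fin n) (Fin n) ℝ) (hQ : Qᵀ = Q) (p : ℝ) (ξ : Fin n → ℂ) :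
    (herm ((cplx P Q).mulVec ξ) (Jmap p ξ)).re
      = (1 / p) * rdot (P.mulVec fun j => (ξ j).re) (fun j => (ξ j).re)
      + (1 - 1 / p) * rdot (P.mulVec fun j => (ξ j).im) (fun j => (ξ j).im)
      + (1 - 2 / p) * rdot (Q.mulVec fun j => (ξ j).re) (fun j => (ξ j).im) := by
  rw [herm_re]
  have e : ∀ j ∈ Finset.univ,
      ((cplx P Q).mulVec ξ j).re * (Jmap p ξ j).re
        + ((cplx P Q).mulVec ξ j).im * (Jmap p ξ j).im
      = (1 / p) * ((∑ k, P j k * (ξ k).re) * (ξ j).re)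
        - (1 / p) * ((∑ k, Q j k * (ξ k).im) * (ξ j).re)
        + (1 - 1 / p) * ((∑ k, P j k * (ξ k).im) * (ξ j).im)
        + (1 - 1 / p) * ((∑ k, Q j k * (ξ k).re) * (ξ j).im) := by
    intro j _
    rw [cplx_mulVec_re, cplx_mulVec_im, Jmap_re, Jmap_im]
    ring
  rw [Finset.sum_congr rfl e]
  simp only [Finset.sum_add_distrib, Finset.sum_sub_distrib, ← Finset.mul_sum]
  rw [← rdot_def, ← rdot_def, ← rdot_def, ← rdot_def,
    bil_symm hQ (fun j => (ξ j).im) (fun j => (ξ j).re)]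
  ring

lemma herm_real (U V : Matrix (Fin n) (Fin n) ℝ) (α : Fin n → ℝ) :
    herm ((cplx U V).mulVec fun j => (α j : ℂ)) (fun j => (α j : ℂ))
      = ⟨rdot (U.mulVec α) α, rdot (V.mulVec α) α⟩ := by
  apply Complex.ext
  · rw [herm_re]
    show _ = rdot (U.mulVec α) α
    rw [rdot_def]
    refine Finset.sum_congr rfl fun j _ => ?_
    rw [cplx_mulVec_re]
    simp
  · rw [herm_im]
    show _ = rdot (V.mulVec α) α
    rw [rdot_def]
    refine Finset.sum_congr rfl fun j _ => ?_
    rw [cplx_mulVec_im]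
    simp

lemma cnorm_one_iff (ξ : Fin n → ℂ) :
    cnorm ξ = 1 ↔ ∑ j, ((ξ j).re ^ 2 + (ξ j).im ^ 2) = 1 := by
  rw [cnorm, herm_self_re, Real.sqrt_eq_one]

lemma bil_bound (M : Matrix (Fin n) (Fin n) ℝ) (x y : Fin n → ℝ)
    (hx : ∀ k, |x k| ≤ 1) (hy : ∀ j, |y j| ≤ 1) :
    |rdot (M.mulVec x) y| ≤ ∑ j, ∑ k, |M j k| := by
  rw [rdot_eq]
  calc |∑ j, ∑ k, M j k * x k * y j| ≤ ∑ j, |∑ k, M j k * x k * y j| :=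
        Finset.abs_sum_le_sum_abs _ _
    _ ≤ ∑ j, ∑ k, |M j k * x k * y j| :=
        Finset.sum_le_sum fun j _ => Finset.abs_sum_le_sum_abs _ _
    _ ≤ ∑ j, ∑ k, |M j k| := by
        refine Finset.sum_le_sum fun j _ => Finset.sum_le_sum fun k _ => ?_
        rw [abs_mul, abs_mul]
        have h1 := abs_nonneg (M j k)
        have h2 := abs_nonneg (x k)
        have h3 := abs_nonneg (y j)
        have step1 : |M j k| * |x k| ≤ |M j k| :=
          le_of_le_of_eq (mul_le_mul le_rfl (hx k) h2 h1) (mul_one _)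
        have step2 : |M j k| * |x k| * |y j| ≤ |M j k| * |x k| :=
          le_of_le_of_eq (mul_le_mul le_rfl (hy j) h3 (mul_nonneg h1 h2)) (mul_one _)
        exact le_trans step2 step1

end Stmt10Aux

namespace Stmt10Aux
open Paper Finset
variable {n : ℕ}

lemma sq_to_le {X Y : ℝ} (hX : 0 ≤ X) (hY : 0 ≤ Y) (h : X ^ 2 ≤ Y ^ 2) : X ≤ Y := by
  have h' := Real.sqrt_le_sqrt h
  rwa [Real.sqrt_sq hX, Real.sqrt_sq hY] at h'

lemma bddS (P Q : Matrix (Fin n) (Fin n) ℝ) (hQ : Qᵀ = Q) (p : ℝ) :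
    BddBelow {t : ℝ | ∃ ξ : Fin n → ℂ, cnorm ξ = 1 ∧
      t = 2 * (herm ((cplx P Q).mulVec ξ) (Jmap p ξ)).re} := by
  set T : ℝ := (∑ j, ∑ k, |P j k|) + (∑ j, ∑ k, |Q j k|) with hT
  have hT0 : 0 ≤ T := by positivity
  have hPT : (∑ j, ∑ k, |P j k|) ≤ T := by
    have : (0:ℝ) ≤ ∑ j, ∑ k, |Q j k| := by positivity
    linarith
  have hQT : (∑ j, ∑ k, |Q j k|) ≤ T := by
    have : (0:ℝ) ≤ ∑ j, ∑ k, |P j k| := by positivity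
    linarith
  refine ⟨-(2 * (|1/p| + |1 - 1/p| + |1 - 2/p|) * T), ?_⟩
  rintro t ⟨ξ, hξ, rfl⟩
  rw [keyD P Q hQ]
  rw [cnorm_one_iff] at hξ
  have hcomp : ∀ j, (ξ j).re ^ 2 + (ξ j).im ^ 2 ≤ 1 := by
    intro j
    rw [← hξ]
    exact Finset.single_le_sum (f := fun i => (ξ i).re ^ 2 + (ξ i).im ^ 2)
      (fun i _ => by positivity) (Finset.mem_univ j)
  have hre : ∀ j, |(ξ j).re| ≤ 1 := fun j =>
    abs_le_one_iff_mul_self_le_one.mpr (by nlinarith [sq_nonneg (ξ j).im, hcomp j])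
  have him : ∀ j, |(ξ j).im| ≤ 1 := fun j =>
    abs_le_one_iff_mul_self_le_one.mpr (by nlinarith [sq_nonneg (ξ j).re, hcomp j])
  have b1 := (bil_bound P _ _ hre hre).trans hPT
  have b2 := (bil_bound P _ _ him him).trans hPT
  have b3 := (bil_bound Q _ _ hre him).trans hQT
  have e1 : -( |1/p| * T) ≤ (1/p) * rdot (P.mulVec fun j => (ξ j).re) (fun j => (ξ j).re) := by
    have h1 : |(1/p) * rdot (P.mulVec fun j => (ξ j).re) (fun j => (ξ j).re)| ≤ |1/p| * T := by
      rw [abs_mul]; exact mul_le_mul_of_nonneg_left b1 (abs_nonneg _)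
    linarith [neg_abs_le ((1/p) * rdot (P.mulVec fun j => (ξ j).re) (fun j => (ξ j).re))]
  have e2 : -( |1 - 1/p| * T) ≤ (1 - 1/p) * rdot (P.mulVec fun j => (ξ j).im) (fun j => (ξ j).im) := by
    have h1 : |(1 - 1/p) * rdot (P.mulVec fun j => (ξ j).im) (fun j => (ξ j).im)| ≤ |1 - 1/p| * T := by
      rw [abs_mul]; exact mul_le_mul_of_nonneg_left b2 (abs_nonneg _)
    linarith [neg_abs_le ((1 - 1/p) * rdot (P.mulVec fun j => (ξ j).im) (fun j => (ξ j).im))]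
  have e3 : -( |1 - 2/p| * T) ≤ (1 - 2/p) * rdot (Q.mulVec fun j => (ξ j).re) (fun j => (ξ j).im) := by
    have h1 : |(1 - 2/p) * rdot (Q.mulVec fun j => (ξ j).re) (fun j => (ξ j).im)| ≤ |1 - 2/p| * T := by
      rw [abs_mul]; exact mul_le_mul_of_nonneg_left b3 (abs_nonneg _)
    linarith [neg_abs_le ((1 - 2/p) * rdot (Q.mulVec fun j => (ξ j).re) (fun j => (ξ j).im))]
  nlinarith [e1, e2, e3]

lemma P1_iff (P Q : Matrix (Fin n) (Fin n) ℝ) (hQ : Qᵀ = Q) (p : ℝ) :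
    (0 ≤ sInf {t : ℝ | ∃ ξ : Fin n → ℂ, cnorm ξ = 1 ∧
      t = 2 * (herm ((cplx P Q).mulVec ξ) (Jmap p ξ)).re}) ↔
    (∀ α β : Fin n → ℝ, 0 ≤ (1/p) * rdot (P.mulVec α) α
      + (1 - 1/p) * rdot (P.mulVec β) β + (1 - 2/p) * rdot (Q.mulVec α) β) := by
  constructor
  · intro h α β
    by_cases hs : (∑ j, (α j ^ 2 + β j ^ 2)) = 0
    · have hz : ∀ j, α j = 0 ∧ β j = 0 := by
        intro j
        have h1 : α j ^ 2 + β j ^ 2 ≤ 0 := by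
          rw [← hs]
          exact Finset.single_le_sum (f := fun i => α i ^ 2 + β i ^ 2)
            (fun i _ => by positivity) (Finset.mem_univ j)
        constructor <;> nlinarith [sq_nonneg (α j), sq_nonneg (β j)]
      have hα : α = 0 := funext fun j => (hz j).1
      have hβ : β = 0 := funext fun j => (hz j).2
      subst hα; subst hβ
      simp [rdot, Matrix.mulVec_zero]
    · have hs' : 0 < ∑ j, (α j ^ 2 + β j ^ 2) :=
        lt_of_le_of_ne (by positivity) (Ne.symm hs)
      set c := Real.sqrt (∑ j, (α j ^ 2 + β j ^ 2)) with hc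
      have hc0 : 0 < c := Real.sqrt_pos.mpr hs'
      have hc2 : c ^ 2 = ∑ j, (α j ^ 2 + β j ^ 2) := Real.sq_sqrt hs'.le
      set ξ : Fin n → ℂ := fun j => ⟨c⁻¹ * α j, c⁻¹ * β j⟩ with hξdef
      have hre : (fun j => (ξ j).re) = c⁻¹ • α := rfl
      have him : (fun j => (ξ j).im) = c⁻¹ • β := rfl
      have hξ : cnorm ξ = 1 := by
        rw [cnorm_one_iff]
        have e : ∀ j ∈ Finset.univ, ((ξ j).re ^ 2 + (ξ j).im ^ 2)
            = (c⁻¹) ^ 2 * (α j ^ 2 + β j ^ 2) := fun j _ => by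
          show (c⁻¹ * α j) ^ 2 + (c⁻¹ * β j) ^ 2 = _
          ring
        rw [Finset.sum_congr rfl e, ← Finset.mul_sum, ← hc2]
        field_simp
      have hmem : 2 * (herm ((cplx P Q).mulVec ξ) (Jmap p ξ)).re ∈
          {t : ℝ | ∃ ξ : Fin n → ℂ, cnorm ξ = 1 ∧
            t = 2 * (herm ((cplx P Q).mulVec ξ) (Jmap p ξ)).re} := ⟨ξ, hξ, rfl⟩
      have hle := csInf_le (bddS P Q hQ p) hmem
      have hval : 2 * (herm ((cplx P Q).mulVec ξ) (Jmap p ξ)).re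
          = 2 * (c⁻¹ * c⁻¹) * ((1/p) * rdot (P.mulVec α) α
            + (1 - 1/p) * rdot (P.mulVec β) β + (1 - 2/p) * rdot (Q.mulVec α) β) := by
        rw [keyD P Q hQ, hre, him, bil_smul_smul, bil_smul_smul, bil_smul_smul]
        ring
      have h0 : 0 ≤ 2 * (c⁻¹ * c⁻¹) * ((1/p) * rdot (P.mulVec α) α
          + (1 - 1/p) * rdot (P.mulVec β) β + (1 - 2/p) * rdot (Q.mulVec α) β) := by
        rw [← hval]; linarith
      have hcc : 0 < c⁻¹ * c⁻¹ := by positivity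
      nlinarith [h0, hcc]
  · intro h
    apply Real.sInf_nonneg
    rintro t ⟨ξ, hξ, rfl⟩
    rw [keyD P Q hQ]
    have := h (fun j => (ξ j).re) (fun j => (ξ j).im)
    linarith

end Stmt10Aux

namespace Stmt10Aux
open Paper Finset
variable {n : ℕ}

lemma quad_to_P2 {p : ℝ} (hp : 1 < p) (P Q : Matrix (Fin n) (Fin n) ℝ)
    (hPpos : ∀ α : Fin n → ℝ, α ≠ 0 → 0 < rdot (P.mulVec α) α)
    (h : ∀ α β : Fin n → ℝ, 0 ≤ (1/p) * rdot (P.mulVec α) α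
      + (1 - 1/p) * rdot (P.mulVec β) β + (1 - 2/p) * rdot (Q.mulVec α) β)
    (α : Fin n → ℝ) :
    |p - 2| * |rdot (Q.mulVec α) α| ≤ 2 * Real.sqrt (p - 1) * rdot (P.mulVec α) α := by
  have hp0 : 0 < p := lt_trans one_pos hp
  by_cases hα : α = 0
  · subst hα
    simp [rdot, Matrix.mulVec_zero]
  · set a := rdot (P.mulVec α) α with ha'
    set b := rdot (Q.mulVec α) α with hb'
    have ha : 0 < a := hPpos α hα
    have hq' : ∀ t : ℝ, 0 ≤ (1/p) * a + ((1 - 1/p) * a) * t ^ 2 + ((1 - 2/p) * b) * t := by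
      intro t
      have h0 := h α (t • α)
      rw [bil_smul_smul, bil_smul_right] at h0
      nlinarith [h0]
    set A := (1 - 1/p) * a with hA'
    set B := (1 - 2/p) * b with hB'
    set C := (1/p) * a with hC'
    have hA : 0 < A := by
      have h1 : 0 < 1 - 1/p := by
        rw [sub_pos, div_lt_one hp0]; linarith
      exact mul_pos h1 ha
    set t₀ := -B / (2 * A) with ht₀
    have h0 := hq' t₀
    have hB2 : B = -(2 * A * t₀) := by
      rw [ht₀]; field_simp
    have hBt : B * t₀ = -(2 * A * t₀ ^ 2) := by rw [hB2]; ring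
    have hAt : A * t₀ ^ 2 ≤ C := by
      have e : C + A * t₀ ^ 2 + B * t₀ = C - A * t₀ ^ 2 := by rw [hBt]; ring
      nlinarith [h0]
    have hdisc : B ^ 2 ≤ 4 * A * C := by
      nlinarith [hB2, hAt, hA.le, mul_le_mul_of_nonneg_left hAt hA.le]
    have ep : (p - 2) = p * (1 - 2/p) := by field_simp
    have e4 : p ^ 2 * (4 * A * C) = 4 * (p - 1) * a ^ 2 := by
      rw [hA', hC']; field_simp
    have hkey : ((p - 2) * b) ^ 2 ≤ 4 * (p - 1) * a ^ 2 := by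
      calc ((p - 2) * b) ^ 2 = p ^ 2 * B ^ 2 := by rw [ep, hB']; ring
        _ ≤ p ^ 2 * (4 * A * C) := mul_le_mul_of_nonneg_left hdisc (sq_nonneg p)
        _ = 4 * (p - 1) * a ^ 2 := e4
    have e2 : (2 * Real.sqrt (p - 1) * a) ^ 2 = 4 * (p - 1) * a ^ 2 := by
      have hs := Real.sq_sqrt (show (0:ℝ) ≤ p - 1 by linarith)
      linear_combination (4 * a ^ 2) * hs
    have efin : (|p - 2| * |b|) ^ 2 ≤ (2 * Real.sqrt (p - 1) * a) ^ 2 := by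
      rw [e2, ← abs_mul, sq_abs]
      exact hkey
    exact sq_to_le (by positivity)
      (mul_nonneg (mul_nonneg (by norm_num) (Real.sqrt_nonneg _)) ha.le) efin

lemma P2_to_quad {p : ℝ} (hp : 1 < p) (P Q : Matrix (Fin n) (Fin n) ℝ) (hQ : Qᵀ = Q)
    (h2 : ∀ γ : Fin n → ℝ, |p - 2| * |rdot (Q.mulVec γ) γ|
      ≤ 2 * Real.sqrt (p - 1) * rdot (P.mulVec γ) γ)
    (α β : Fin n → ℝ) :
    0 ≤ (1/p) * rdot (P.mulVec α) α + (1 - 1/p) * rdot (P.mulVec β) β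
      + (1 - 2/p) * rdot (Q.mulVec α) β := by
  have hp0 : 0 < p := lt_trans one_pos hp
  have hr : 0 < Real.sqrt (p - 1) := Real.sqrt_pos.mpr (by linarith)
  have master : ∀ u v : Fin n → ℝ, |p - 2| * |rdot (Q.mulVec u) v|
      ≤ Real.sqrt (p - 1) * rdot (P.mulVec u) u + Real.sqrt (p - 1) * rdot (P.mulVec v) v := by
    intro u v
    have k1 := h2 (u + v)
    have k2 := h2 (u - v)
    have hpolar := polar hQ u v
    have hpar := parallelogram P u v
    have k3 : |rdot (Q.mulVec (u + v)) (u + v) - rdot (Q.mulVec (u - v)) (u - v)|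
        ≤ |rdot (Q.mulVec (u + v)) (u + v)| + |rdot (Q.mulVec (u - v)) (u - v)| := abs_sub _ _
    rw [hpolar, abs_mul] at k3
    norm_num at k3
    have k3' := mul_le_mul_of_nonneg_left k3 (abs_nonneg (p - 2))
    have hpar' := congrArg (fun x : ℝ => Real.sqrt (p - 1) * x) hpar
    nlinarith [k1, k2, k3', hpar']
  set r := Real.sqrt (p - 1) with hrdef
  have hrr : 0 < Real.sqrt r := Real.sqrt_pos.mpr hr
  set t := (Real.sqrt r)⁻¹ with htdef
  have ht : 0 < t := by positivity
  have ht2 : t * t = r⁻¹ := by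
    rw [htdef, ← mul_inv, Real.mul_self_sqrt hr.le]
  have hti2 : t⁻¹ * t⁻¹ = r := by
    rw [← mul_inv, ht2, inv_inv]
  have hm := master (t • α) (t⁻¹ • β)
  rw [bil_smul_smul Q t t⁻¹ α β, bil_smul_smul P t t α α, bil_smul_smul P t⁻¹ t⁻¹ β β,
    mul_inv_cancel₀ (ne_of_gt ht), one_mul] at hm
  have hrr2 : r * r = p - 1 := Real.mul_self_sqrt (by linarith)
  have e1 : r * (t * t * rdot (P.mulVec α) α) = rdot (P.mulVec α) α := by
    rw [ht2]
    field_simp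
  have e2 : r * (t⁻¹ * t⁻¹ * rdot (P.mulVec β) β) = (p - 1) * rdot (P.mulVec β) β := by
    rw [hti2, ← mul_assoc, hrr2]
  have hm' : |p - 2| * |rdot (Q.mulVec α) β|
      ≤ rdot (P.mulVec α) α + (p - 1) * rdot (P.mulVec β) β := by
    calc |p - 2| * |rdot (Q.mulVec α) β|
        ≤ r * (t * t * rdot (P.mulVec α) α) + r * (t⁻¹ * t⁻¹ * rdot (P.mulVec β) β) := by
          nlinarith [hm]
      _ = rdot (P.mulVec α) α + (p - 1) * rdot (P.mulVec β) β := by rw [e1, e2]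
  have e3 : |1 - 2/p| = |p - 2| / p := by
    have e0 : (1:ℝ) - 2/p = (p - 2) / p := by field_simp
    rw [e0, abs_div, abs_of_pos hp0]
  have h5 : |(1 - 2/p) * rdot (Q.mulVec α) β|
      ≤ (1/p) * (rdot (P.mulVec α) α + (p - 1) * rdot (P.mulVec β) β) := by
    rw [abs_mul, e3]
    calc |p - 2| / p * |rdot (Q.mulVec α) β| = (1/p) * (|p - 2| * |rdot (Q.mulVec α) β|) := by
          ring
      _ ≤ (1/p) * (rdot (P.mulVec α) α + (p - 1) * rdot (P.mulVec β) β) :=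
          mul_le_mul_of_nonneg_left hm' (by positivity)
  have h6 := neg_abs_le ((1 - 2/p) * rdot (Q.mulVec α) β)
  have e5 : (1/p) * (rdot (P.mulVec α) α + (p - 1) * rdot (P.mulVec β) β)
      = (1/p) * rdot (P.mulVec α) α + (1 - 1/p) * rdot (P.mulVec β) β := by
    field_simp
  linarith [h5, h6, e5.symm.le, e5.le]

lemma real1 {p : ℝ} (hp : 1 < p) (a b : ℝ)
    (h : |p - 2| * |b| ≤ 2 * Real.sqrt (p - 1) * a) :
    0 ≤ a ∧ |p - 2| * Real.sqrt (a ^ 2 + b ^ 2) ≤ p * a := by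
  have hp0 : 0 < p := lt_trans one_pos hp
  have hr : 0 < Real.sqrt (p - 1) := Real.sqrt_pos.mpr (by linarith)
  have h0 : 0 ≤ 2 * Real.sqrt (p - 1) * a := le_trans (by positivity) h
  have ha : 0 ≤ a := by
    by_contra hneg
    push_neg at hneg
    nlinarith [h0, hr]
  refine ⟨ha, ?_⟩
  have hs := Real.sq_sqrt (show (0:ℝ) ≤ p - 1 by linarith)
  have hsq : ((p - 2) * b) ^ 2 ≤ 4 * (p - 1) * a ^ 2 := by
    have h' := mul_self_le_mul_self (by positivity) h
    have e1 : |p - 2| * |b| * (|p - 2| * |b|) = ((p - 2) * b) ^ 2 := by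
      rw [← abs_mul, ← sq_abs]; ring
    have e2 : 2 * Real.sqrt (p - 1) * a * (2 * Real.sqrt (p - 1) * a)
        = 4 * (p - 1) * a ^ 2 := by
      linear_combination (4 * a ^ 2) * hs
    rw [e1, e2] at h'
    exact h'
  have hss := Real.sq_sqrt (show (0:ℝ) ≤ a ^ 2 + b ^ 2 by positivity)
  have hgoal2 : (|p - 2| * Real.sqrt (a ^ 2 + b ^ 2)) ^ 2 ≤ (p * a) ^ 2 := by
    have e : (|p - 2| * Real.sqrt (a ^ 2 + b ^ 2)) ^ 2 = (p - 2) ^ 2 * (a ^ 2 + b ^ 2) := by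
      rw [mul_pow, sq_abs, hss]
    rw [e]
    nlinarith [hsq]
  exact sq_to_le (by positivity) (by positivity) hgoal2

lemma real2 {p : ℝ} (hp : 1 < p) (a b : ℝ) (ha : 0 ≤ a)
    (h : |p - 2| * Real.sqrt (a ^ 2 + b ^ 2) ≤ p * a) :
    |p - 2| * |b| ≤ 2 * Real.sqrt (p - 1) * a := by
  have hp0 : 0 < p := lt_trans one_pos hp
  have hs := Real.sq_sqrt (show (0:ℝ) ≤ p - 1 by linarith)
  have hss := Real.sq_sqrt (show (0:ℝ) ≤ a ^ 2 + b ^ 2 by positivity)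
  have hsq : (p - 2) ^ 2 * (a ^ 2 + b ^ 2) ≤ p ^ 2 * a ^ 2 := by
    have h' := mul_self_le_mul_self (by positivity) h
    have e : |p - 2| * Real.sqrt (a ^ 2 + b ^ 2) * (|p - 2| * Real.sqrt (a ^ 2 + b ^ 2))
        = (p - 2) ^ 2 * (a ^ 2 + b ^ 2) := by
      calc |p - 2| * Real.sqrt (a ^ 2 + b ^ 2) * (|p - 2| * Real.sqrt (a ^ 2 + b ^ 2))
          = |p - 2| ^ 2 * Real.sqrt (a ^ 2 + b ^ 2) ^ 2 := by ring
        _ = (p - 2) ^ 2 * (a ^ 2 + b ^ 2) := by rw [sq_abs, hss]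
    have e2 : p * a * (p * a) = p ^ 2 * a ^ 2 := by ring
    rw [e, e2] at h'
    exact h'
  have hb2 : ((p - 2) * b) ^ 2 ≤ (2 * Real.sqrt (p - 1) * a) ^ 2 := by
    have e : (2 * Real.sqrt (p - 1) * a) ^ 2 = 4 * (p - 1) * a ^ 2 := by
      linear_combination (4 * a ^ 2) * hs
    rw [e]
    nlinarith [hsq]
  have hfin := Real.sqrt_le_sqrt hb2
  rw [Real.sqrt_sq_eq_abs,
    Real.sqrt_sq (mul_nonneg (by positivity) ha)] at hfin
  rwa [abs_mul] at hfin

end Stmt10Aux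

namespace Stmt10Aux
open Paper Finset
variable {n : ℕ}

lemma arg_iff (p : ℝ) (hp : 1 < p) (z : ℂ) (hz : z ≠ 0) :
    |Complex.arg z| ≤ Real.arccos |1 - 2 / p| ↔ |1 - 2 / p| * ‖z‖ ≤ z.re := by
  have hp0 : 0 < p := lt_trans one_pos hp
  have hx1 : |1 - 2 / p| ≤ 1 := by
    rw [abs_le]
    constructor
    · have h2p : 2 / p ≤ 2 := by rw [div_le_iff₀ hp0]; nlinarith
      linarith
    · have h2p : 0 < 2 / p := by positivity
      linarith
  have hcos : Real.cos (Real.arccos |1 - 2 / p|) = |1 - 2 / p| :=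
    Real.cos_arccos (by linarith [abs_nonneg (1 - 2/p)]) hx1
  have habs : 0 < ‖z‖ := norm_pos_iff.mpr hz
  have hmem1 : Real.arccos |1 - 2 / p| ∈ Set.Icc 0 Real.pi :=
    ⟨Real.arccos_nonneg _, Real.arccos_le_pi _⟩
  have hmem2 : |Complex.arg z| ∈ Set.Icc 0 Real.pi :=
    ⟨abs_nonneg _, Complex.abs_arg_le_pi z⟩
  have key := Real.strictAntiOn_cos.le_iff_ge hmem1 hmem2
  rw [Real.cos_abs, Complex.cos_arg hz, hcos] at key
  exact key.symm.trans (le_div_iff₀ habs)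

end Stmt10Aux



open Paper Stmt10Aux

/-- with `A = U + iV`, `U_s` positive definite and `A_s = (A + Aᵀ)/2`,
the following are equivalent: (1) `Δ_p(A_s) ≥ 0`; (2) `|p−2||⟨Vα,α⟩| ≤ 2√(p−1)⟨Uα,α⟩`
for all real `α`; (3) `⟨Aα,α⟩` lies in the closed sector of half-angle
`φ_p = arccos|1−2/p|` for all real `α`. -/
theorem statement10 (n : ℕ) (p : ℝ) (hp : 1 < p)
    (U V : Matrix (Fin n) (Fin n) ℝ)
    (hUs : ∀ α : Fin n → ℝ, α ≠ 0 → 0 < Paper.rdot ((Paper.symPart U).mulVec α) α) :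
    List.TFAE [
      0 ≤ Paper.Deltap p (Paper.symPart (Paper.cplx U V)),
      ∀ α : Fin n → ℝ,
        |p - 2| * |Paper.rdot (V.mulVec α) α|
          ≤ 2 * Real.sqrt (p - 1) * Paper.rdot (U.mulVec α) α,
      ∀ α : Fin n → ℝ,
        Paper.herm ((Paper.cplx U V).mulVec (fun j => (α j : ℂ))) (fun j => (α j : ℂ)) = 0 ∨
        |Complex.arg (Paper.herm ((Paper.cplx U V).mulVec (fun j => (α j : ℂ)))
            (fun j => (α j : ℂ)))| ≤ Real.arccos |1 - 2 / p| ] := by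
  have hp0 : 0 < p := lt_trans one_pos hp
  have hQsym : (symPart V)ᵀ = symPart V := symPart_symm V
  tfae_have 1 ↔ 2 := by
    have h1iff : (0 ≤ Paper.Deltap p (Paper.symPart (Paper.cplx U V))) ↔
        (∀ α β : Fin n → ℝ, 0 ≤ (1/p) * rdot ((symPart U).mulVec α) α
          + (1 - 1/p) * rdot ((symPart U).mulVec β) β
          + (1 - 2/p) * rdot ((symPart V).mulVec α) β) := by
      rw [show Paper.symPart (Paper.cplx U V) = Paper.cplx (symPart U) (symPart V) from
        symPart_cplx U V]
      exact P1_iff (symPart U) (symPart V) hQsym p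
    rw [h1iff]
    constructor
    · intro h α
      rw [← sym_rdot U α, ← sym_rdot V α]
      exact quad_to_P2 hp (symPart U) (symPart V) hUs h α
    · intro h2 α β
      refine P2_to_quad hp (symPart U) (symPart V) hQsym (fun γ => ?_) α β
      rw [sym_rdot U γ, sym_rdot V γ]
      exact h2 γ
  tfae_have 2 ↔ 3 := by
    constructor
    · intro h2 α
      rw [herm_real]
      by_cases hz : (⟨Paper.rdot (U.mulVec α) α, Paper.rdot (V.mulVec α) α⟩ : ℂ) = 0
      · exact Or.inl hz
      · right
        rw [arg_iff p hp _ hz]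
        obtain ⟨ha, hle⟩ := real1 hp _ _ (h2 α)
        have habs : ‖(⟨Paper.rdot (U.mulVec α) α, Paper.rdot (V.mulVec α) α⟩ : ℂ)‖
            = Real.sqrt ((Paper.rdot (U.mulVec α) α) ^ 2 + (Paper.rdot (V.mulVec α) α) ^ 2) := by
          rw [Complex.norm_def, Complex.normSq_apply]
          norm_num [pow_two]
        have e3 : |1 - 2/p| = |p - 2| / p := by
          have e0 : (1:ℝ) - 2/p = (p - 2) / p := by field_simp
          rw [e0, abs_div, abs_of_pos hp0]
        show |1 - 2/p| * _ ≤ Paper.rdot (U.mulVec α) α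
        rw [habs, e3, div_mul_eq_mul_div, div_le_iff₀ hp0]
        linarith [hle]
    · intro h3 α
      have hz' := h3 α
      rw [herm_real] at hz'
      by_cases hz : (⟨Paper.rdot (U.mulVec α) α, Paper.rdot (V.mulVec α) α⟩ : ℂ) = 0
      · have ha : Paper.rdot (U.mulVec α) α = 0 := by
          have := congrArg Complex.re hz; simpa using this
        have hb : Paper.rdot (V.mulVec α) α = 0 := by
          have := congrArg Complex.im hz; simpa using this
        rw [ha, hb]
        simp
      · have harg := hz'.resolve_left hz
        have hre := (arg_iff p hp _ hz).mp harg
        have habs : ‖(⟨Paper.rdot (U.mulVec α) α, Paper.rdot (V.mulVec α) α⟩ : ℂ)‖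
            = Real.sqrt ((Paper.rdot (U.mulVec α) α) ^ 2 + (Paper.rdot (V.mulVec α) α) ^ 2) := by
          rw [Complex.norm_def, Complex.normSq_apply]
          norm_num [pow_two]
        rw [habs] at hre
        have e3 : |1 - 2/p| = |p - 2| / p := by
          have e0 : (1:ℝ) - 2/p = (p - 2) / p := by field_simp
          rw [e0, abs_div, abs_of_pos hp0]
        rw [e3, div_mul_eq_mul_div] at hre
        have hre' : |p - 2| * Real.sqrt ((Paper.rdot (U.mulVec α) α) ^ 2
            + (Paper.rdot (V.mulVec α) α) ^ 2) ≤ p * Paper.rdot (U.mulVec α) α := by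
          rw [div_le_iff₀ hp0] at hre
          linarith [hre]
        have ha : 0 ≤ Paper.rdot (U.mulVec α) α := by
          have h0 : 0 ≤ |p - 2| * Real.sqrt ((Paper.rdot (U.mulVec α) α) ^ 2
              + (Paper.rdot (V.mulVec α) α) ^ 2) := by positivity
          nlinarith [hre', hp0]
        exact real2 hp _ _ ha hre'
  tfae_finish
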